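/- Assume m = 1 (a single input) and that the graph of the system is an input-rooted out-branching: every state i is the endpoint of exactly one walk from the input; let d_i denote the length of this unique walk and d_max = max_i d_i. Then the maximum cardinality of a herdable subset of states equals the sum over d = 1,...,d_max of max(|N_d|, |P_d|). -/

import Mathlib

/-- `k` is a walk of length `e + 1` from input `j` to state `i`: it visits the states
`k 0, k 1, …, k e`, ends at `i`, starts along a nonzero entry of `B`, and follows
nonzero entries of `A`. -/
def IsWalk {n m : ℕ} (A : Matrix (Fin n) (Fin n) ℝ) (B : Matrix (Fin n) (Fin m) ℝ)
    (j : Fin m) (i : Fin n) {e : ℕ} (k : Fin (e + 1) → Fin n) : Prop :=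
  k (Fin.last e) = i ∧ B (k 0) j ≠ 0 ∧ ∀ t : Fin e, A (k t.succ) (k t.castSucc) ≠ 0

/-- The weight of the walk `k 0, …, k e` from input `j`:
`B (k 0) j * ∏ₜ A (k (t+1)) (k t)`. -/
def walkWeight {n m : ℕ} (A : Matrix (Fin n) (Fin n) ℝ) (B : Matrix (Fin n) (Fin m) ℝ)
    (j : Fin m) {e : ℕ} (k : Fin (e + 1) → Fin n) : ℝ :=
  B (k 0) j * ∏ t : Fin e, A (k t.succ) (k t.castSucc)

open Classical in
/-- `rho A B j i d` is the sum of the weights of all walks of length `d` from input `j`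
to state `i` (zero if there are none, in particular for `d = 0`). -/
noncomputable def rho {n m : ℕ} (A : Matrix (Fin n) (Fin n) ℝ) (B : Matrix (Fin n) (Fin m) ℝ)
    (j : Fin m) (i : Fin n) : ℕ → ℝ
  | 0 => 0
  | e + 1 => ∑ k : Fin (e + 1) → Fin n,
      if IsWalk A B j i k then walkWeight A B j k else 0

/-- `Pset A B j d` is the set of states reachable from input `j` by at least one walk of
length `d` of positive weight. -/
def Pset {n m : ℕ} (A : Matrix (Fin n) (Fin n) ℝ) (B : Matrix (Fin n) (Fin m) ℝ)
    (j : Fin m) : ℕ → Set (Fin n)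
  | 0 => ∅
  | e + 1 => {i | ∃ k : Fin (e + 1) → Fin n, IsWalk A B j i k ∧ 0 < walkWeight A B j k}

/-- `Nset A B j d` is the set of states reachable from input `j` by at least one walk of
length `d` of negative weight. -/
def Nset {n m : ℕ} (A : Matrix (Fin n) (Fin n) ℝ) (B : Matrix (Fin n) (Fin m) ℝ)
    (j : Fin m) : ℕ → Set (Fin n)
  | 0 => ∅
  | e + 1 => {i | ∃ k : Fin (e + 1) → Fin n, IsWalk A B j i k ∧ walkWeight A B j k < 0}

/-- The controllability matrix `C = [B, AB, …, A^{n-1} B]`; the column indexed by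
`(d, j)` is the `j`-th column of `A^d B`. -/
def ctrb {n m : ℕ} (A : Matrix (Fin n) (Fin n) ℝ) (B : Matrix (Fin n) (Fin m) ℝ) :
    Matrix (Fin n) (Fin n × Fin m) ℝ := fun i p => (A ^ (p.1 : ℕ) * B) i p.2

section aux
variable {n m : ℕ} {A : Matrix (Fin n) (Fin n) ℝ} {B : Matrix (Fin n) (Fin m) ℝ}
  {j : Fin m} {i : Fin n}

theorem walkWeight_ne_zero {e : ℕ} {k : Fin (e + 1) → Fin n} (h : IsWalk A B j i k) :
    walkWeight A B j k ≠ 0 :=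
  mul_ne_zero h.2.1 (Finset.prod_ne_zero_iff.2 fun t _ => h.2.2 t)

theorem isWalk_prefix {e : ℕ} {k : Fin (e + 1) → Fin n} (h : IsWalk A B j i k)
    (t : Fin (e + 1)) :
    IsWalk A B j (k t) (fun s : Fin (t.1 + 1) => k (Fin.castLE (by omega) s)) := by
  obtain ⟨h1, h2, h3⟩ := h
  refine ⟨?_, ?_, ?_⟩
  · congr 1
  · convert h2 using 3
    exact Fin.ext (by simp)
  · intro s
    have hs : s.1 < e := by omega
    have := h3 ⟨s.1, hs⟩
    convert this using 3 <;> exact Fin.ext (by simp)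

theorem isWalk_snoc {e : ℕ} {p : Fin n} {k : Fin (e + 1) → Fin n} (h : IsWalk A B j p k)
    (hA : A i p ≠ 0) :
    IsWalk A B j i (Fin.snoc k i) := by
  obtain ⟨h1, h2, h3⟩ := h
  subst h1
  refine ⟨Fin.snoc_last _ _, ?_, ?_⟩
  · have : (Fin.snoc k i : Fin (e+2) → Fin n) 0 = k 0 := by
      have : (0 : Fin (e+2)) = Fin.castSucc 0 := rfl
      rw [this, Fin.snoc_castSucc]
    rw [this]; exact h2
  · intro t
    induction t using Fin.lastCases with
    | last =>
      rw [Fin.succ_last, Fin.snoc_last, Fin.snoc_castSucc]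
      exact hA
    | cast u =>
      rw [Fin.succ_castSucc, Fin.snoc_castSucc, Fin.snoc_castSucc]
      exact h3 u

theorem walkWeight_snoc {e : ℕ} (k : Fin (e + 1) → Fin n) (i : Fin n) :
    walkWeight A B j (Fin.snoc k i) = A i (k (Fin.last e)) * walkWeight A B j k := by
  unfold walkWeight
  rw [Fin.prod_univ_castSucc]
  have h0 : (Fin.snoc k i : Fin (e+2) → Fin n) 0 = k 0 := by
    have : (0 : Fin (e+2)) = Fin.castSucc 0 := rfl
    rw [this, Fin.snoc_castSucc]
  have hlast : A ((Fin.snoc k i : Fin (e+2) → Fin n) ((Fin.last e).succ))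
      ((Fin.snoc k i : Fin (e+2) → Fin n) ((Fin.last e).castSucc))
      = A i (k (Fin.last e)) := by
    rw [Fin.succ_last, Fin.snoc_last, Fin.snoc_castSucc]
  have hmid : ∀ u : Fin e, A ((Fin.snoc k i : Fin (e+2) → Fin n) ((u.castSucc).succ))
      ((Fin.snoc k i : Fin (e+2) → Fin n) ((u.castSucc).castSucc))
      = A (k u.succ) (k u.castSucc) := fun u => by
    rw [Fin.succ_castSucc, Fin.snoc_castSucc, Fin.snoc_castSucc]
  rw [h0, hlast]
  rw [Finset.prod_congr rfl (fun u _ => hmid u)]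
  ring

theorem isWalk_init {e : ℕ} {k : Fin (e + 2) → Fin n} (h : IsWalk A B j i k) :
    IsWalk A B j (k (Fin.castSucc (Fin.last e))) (Fin.init k) := by
  obtain ⟨h1, h2, h3⟩ := h
  refine ⟨rfl, ?_, ?_⟩
  · have : Fin.init k 0 = k 0 := rfl
    rw [this]; exact h2
  · intro t
    have := h3 t.castSucc
    rw [Fin.succ_castSucc] at this
    exact this

theorem isWalk_last_step {e : ℕ} {k : Fin (e + 2) → Fin n} (h : IsWalk A B j i k) :
    A i (k (Fin.castSucc (Fin.last e))) ≠ 0 := by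
  have := h.2.2 (Fin.last e)
  rw [Fin.succ_last, h.1] at this
  exact this

theorem walkWeight_eq_init {e : ℕ} {k : Fin (e + 2) → Fin n} (h : IsWalk A B j i k) :
    walkWeight A B j k
      = A i (k (Fin.castSucc (Fin.last e))) * walkWeight A B j (Fin.init k) := by
  conv_lhs => rw [show k = Fin.snoc (Fin.init k) i by
    rw [← h.1]; exact (Fin.snoc_init_self k).symm]
  rw [walkWeight_snoc]
  rfl

end aux

/-- Single-input system whose graph is an input-rooted out-branching: every state is the
endpoint of exactly one walk from the input; `len i` is the length of this unique walk
and `dmax` its maximum over all states. Then the maximum cardinality of a herdable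
subset of states (herdability of `S` meaning that some `k` in the range of the
controllability matrix satisfies `k i > 0` on `S`) equals
`∑_{d=1}^{dmax} max (|N_d|, |P_d|)`. -/
theorem max_card_herdable_outBranching {n : ℕ}
    (A : Matrix (Fin n) (Fin n) ℝ) (B : Matrix (Fin n) (Fin 1) ℝ)
    (hout : ∀ i : Fin n, ∃! w : (e : ℕ) × (Fin (e + 1) → Fin n), IsWalk A B 0 i w.2)
    (len : Fin n → ℕ)
    (hlen : ∀ (i : Fin n) (e : ℕ) (k : Fin (e + 1) → Fin n), IsWalk A B 0 i k →
      len i = e + 1)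
    (dmax : ℕ) (hdmax : dmax = Finset.univ.sup len) :
    IsGreatest
      {c : ℕ | ∃ S : Set (Fin n),
        (∃ k : Fin n → ℝ, (∃ y : Fin n × Fin 1 → ℝ, (ctrb A B).mulVec y = k) ∧
          ∀ i ∈ S, 0 < k i) ∧ S.ncard = c}
      (∑ d ∈ Finset.Icc 1 dmax, max (Nset A B 0 d).ncard (Pset A B 0 d).ncard) := by
  classical
  -- Skolemize the weight of the unique walk to each state
  obtain ⟨wgt, hwgt_spec⟩ : ∃ w : Fin n → ℝ, ∀ (i : Fin n) (e : ℕ)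
      (k : Fin (e + 1) → Fin n), IsWalk A B 0 i k → walkWeight A B 0 k = w i := by
    refine ⟨fun i => walkWeight A B 0 ((hout i).choose).2, fun i e k hk => ?_⟩
    have h := (hout i).choose_spec.2 ⟨e, k⟩ hk
    exact congrArg (fun w : (e : ℕ) × (Fin (e + 1) → Fin n) => walkWeight A B 0 w.2) h
  have hWalk : ∀ i : Fin n, ∃ (e : ℕ) (k : Fin (e + 1) → Fin n), IsWalk A B 0 i k := by
    intro i
    obtain ⟨w, hw, -⟩ := hout i
    exact ⟨w.1, w.2, hw⟩
  have huniq2 : ∀ (i : Fin n) (e : ℕ) (k k' : Fin (e + 1) → Fin n),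
      IsWalk A B 0 i k → IsWalk A B 0 i k' → k = k' := by
    intro i e k k' hk hk'
    have h := (hout i).unique (y₁ := ⟨e, k⟩) (y₂ := ⟨e, k'⟩) hk hk'
    exact eq_of_heq (Sigma.ext_iff.mp h).2
  have hwgt_ne : ∀ i : Fin n, wgt i ≠ 0 := by
    intro i
    obtain ⟨e, k, hk⟩ := hWalk i
    rw [← hwgt_spec i e k hk]
    exact walkWeight_ne_zero hk
  have hlen_pos : ∀ i : Fin n, 1 ≤ len i := by
    intro i
    obtain ⟨e, k, hk⟩ := hWalk i
    rw [hlen i e k hk]; omega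
  have hlen_le : ∀ i : Fin n, len i ≤ n := by
    intro i
    obtain ⟨e, k, hk⟩ := hWalk i
    have hl : ∀ t : Fin (e + 1), len (k t) = t.1 + 1 := fun t =>
      hlen _ _ _ (isWalk_prefix hk t)
    have hinj : Function.Injective k := by
      intro a b hab
      have ha := hl a
      rw [hab, hl b] at ha
      exact Fin.ext (by omega)
    have := Fintype.card_le_of_injective k hinj
    simp only [Fintype.card_fin] at this
    rw [hlen i e k hk]; omega
  have hDlt : ∀ i : Fin n, len i - 1 < n := fun i => by
    have := hlen_le i; have := hlen_pos i; omega
  -- extension lemma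
  have hext : ∀ (i p : Fin n) (e : ℕ), len p = e + 1 → A i p ≠ 0 →
      len i = e + 2 ∧ ∀ k : Fin (e + 2) → Fin n, IsWalk A B 0 i k →
        k (Fin.castSucc (Fin.last e)) = p := by
    intro i p e hp hA
    obtain ⟨ep, kp, hkp⟩ := hWalk p
    have hep : e = ep := by have := hlen p ep kp hkp; omega
    subst hep
    have hK : IsWalk A B 0 i (Fin.snoc kp i) := isWalk_snoc hkp hA
    refine ⟨hlen i _ _ hK, fun k hk => ?_⟩
    have hkK := huniq2 i (e + 1) k (Fin.snoc kp i) hk hK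
    rw [hkK, Fin.snoc_castSucc, hkp.1]
  -- key lemma: entries of A^e * B
  have hKey : ∀ (e : ℕ) (i : Fin n),
      (A ^ e * B) i 0 = if len i = e + 1 then wgt i else 0 := by
    intro e
    induction e with
    | zero =>
      intro i
      rw [pow_zero, Matrix.one_mul]
      by_cases h : len i = 1
      · rw [if_pos h]
        obtain ⟨e', k, hk⟩ := hWalk i
        have he' : e' = 0 := by have := hlen i e' k hk; omega
        subst he'
        have hki : k 0 = i := hk.1
        rw [← hwgt_spec i 0 k hk]
        simp [walkWeight, hki]
      · rw [if_neg h]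
        by_contra hB
        have hk : IsWalk A B 0 i (fun _ : Fin 1 => i) :=
          ⟨rfl, hB, fun t => t.elim0⟩
        exact h (hlen i 0 _ hk)
    | succ e ih =>
      intro i
      have hstep : (A ^ (e + 1) * B) i 0 = ∑ p, A i p * (A ^ e * B) p 0 := by
        rw [pow_succ', Matrix.mul_assoc, Matrix.mul_apply]
      rw [hstep]
      simp_rw [ih]
      by_cases h : len i = e + 2
      · rw [if_pos h]
        obtain ⟨e', k, hk⟩ := hWalk i
        have he' : e' = e + 1 := by have := hlen i e' k hk; omega
        subst he'
        set p0 := k (Fin.castSucc (Fin.last e)) with hp0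
        have hinit : IsWalk A B 0 p0 (Fin.init k) := isWalk_init hk
        have hlp0 : len p0 = e + 1 := hlen _ _ _ hinit
        have hwp0 : walkWeight A B 0 (Fin.init k) = wgt p0 := hwgt_spec _ _ _ hinit
        have hA0 : A i p0 ≠ 0 := isWalk_last_step hk
        rw [Finset.sum_eq_single p0]
        · rw [if_pos hlp0, ← hwp0, ← hwgt_spec i _ k hk, walkWeight_eq_init hk]
        · intro p _ hp
          by_cases hlp : len p = e + 1
          · by_cases hAp : A i p = 0
            · rw [hAp, zero_mul]
            · have heq := (hext i p e hlp hAp).2 k hk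
              exact absurd (heq.symm.trans hp0.symm) hp
          · rw [if_neg hlp, mul_zero]
        · intro hmem
          exact absurd (Finset.mem_univ p0) hmem
      · rw [if_neg h]
        apply Finset.sum_eq_zero
        intro p _
        by_cases hlp : len p = e + 1
        · by_cases hAp : A i p = 0
          · rw [hAp, zero_mul]
          · exact absurd (hext i p e hlp hAp).1 h
        · rw [if_neg hlp, mul_zero]
  -- mulVec formula
  have hMV : ∀ (y : Fin n × Fin 1 → ℝ) (i : Fin n),
      (ctrb A B).mulVec y i = wgt i * y (⟨len i - 1, hDlt i⟩, 0) := by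
    intro y i
    rw [Matrix.mulVec, dotProduct]
    rw [Fintype.sum_prod_type]
    simp_rw [Fin.sum_univ_one]
    have hterm : ∀ d : Fin n, ctrb A B i (d, 0) * y (d, 0)
        = (if len i = d.1 + 1 then wgt i else 0) * y (d, 0) := by
      intro d
      rw [show ctrb A B i (d, 0) = (A ^ (d.1 : ℕ) * B) i 0 from rfl, hKey]
    simp_rw [hterm]
    rw [Finset.sum_eq_single (⟨len i - 1, hDlt i⟩ : Fin n)]
    · rw [if_pos (by have := hlen_pos i; simp; omega)]
    · intro d _ hd
      rw [if_neg, zero_mul]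
      intro hcon
      exact hd (Fin.ext (by simp; omega))
    · intro hmem
      exact absurd (Finset.mem_univ _) hmem
  -- characterization of Pset and Nset
  have hPs : ∀ d : ℕ, Pset A B 0 d = {i : Fin n | len i = d ∧ 0 < wgt i} := by
    intro d
    ext i
    cases d with
    | zero =>
      simp only [Pset, Set.mem_empty_iff_false, Set.mem_setOf_eq, false_iff]
      rintro ⟨h, -⟩
      have := hlen_pos i; omega
    | succ e =>
      simp only [Pset, Set.mem_setOf_eq]
      constructor
      · rintro ⟨k, hk, hw⟩
        exact ⟨hlen i e k hk, by rwa [hwgt_spec i e k hk] at hw⟩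
      · rintro ⟨hl, hw⟩
        obtain ⟨e', k, hk⟩ := hWalk i
        have he' : e = e' := by have := hlen i e' k hk; omega
        subst he'
        exact ⟨k, hk, by rwa [hwgt_spec i e k hk]⟩
  have hNs : ∀ d : ℕ, Nset A B 0 d = {i : Fin n | len i = d ∧ wgt i < 0} := by
    intro d
    ext i
    cases d with
    | zero =>
      simp only [Nset, Set.mem_empty_iff_false, Set.mem_setOf_eq, false_iff]
      rintro ⟨h, -⟩
      have := hlen_pos i; omega
    | succ e =>
      simp only [Nset, Set.mem_setOf_eq]
      constructor
      · rintro ⟨k, hk, hw⟩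
        exact ⟨hlen i e k hk, by rwa [hwgt_spec i e k hk] at hw⟩
      · rintro ⟨hl, hw⟩
        obtain ⟨e', k, hk⟩ := hWalk i
        have he' : e = e' := by have := hlen i e' k hk; omega
        subst he'
        exact ⟨k, hk, by rwa [hwgt_spec i e k hk]⟩
  -- Finset versions
  set Pf : ℕ → Finset (Fin n) :=
    fun d => Finset.univ.filter fun i => len i = d ∧ 0 < wgt i with hPf
  set Nf : ℕ → Finset (Fin n) :=
    fun d => Finset.univ.filter fun i => len i = d ∧ wgt i < 0 with hNf
  have hPcard : ∀ d : ℕ, (Pset A B 0 d).ncard = (Pf d).card := by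
    intro d
    rw [hPs d, ← Set.ncard_coe_finset]
    congr 1
    ext i
    simp [hPf]
  have hNcard : ∀ d : ℕ, (Nset A B 0 d).ncard = (Nf d).card := by
    intro d
    rw [hNs d, ← Set.ncard_coe_finset]
    congr 1
    ext i
    simp [hNf]
  have hsum : ∑ d ∈ Finset.Icc 1 dmax, max (Nset A B 0 d).ncard (Pset A B 0 d).ncard
      = ∑ d ∈ Finset.Icc 1 dmax, max (Nf d).card (Pf d).card :=
    Finset.sum_congr rfl fun d _ => by rw [hPcard, hNcard]
  rw [hsum]
  have hlen_mem : ∀ i : Fin n, len i ∈ Finset.Icc 1 dmax := fun i =>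
    Finset.mem_Icc.2 ⟨hlen_pos i, hdmax ▸ Finset.le_sup (Finset.mem_univ i)⟩
  have hfib : ∀ T : Finset (Fin n),
      T.card = ∑ d ∈ Finset.Icc 1 dmax, (T.filter fun i => len i = d).card := fun T =>
    Finset.card_eq_sum_card_fiberwise fun i _ => hlen_mem i
  constructor
  · -- membership: construct the extremal herdable set
    set y : Fin n × Fin 1 → ℝ :=
      fun p => if (Nf (p.1.1 + 1)).card ≤ (Pf (p.1.1 + 1)).card then 1 else -1 with hy
    set Sf : Finset (Fin n) := Finset.univ.filter fun i =>
      if (Nf (len i)).card ≤ (Pf (len i)).card then 0 < wgt i else wgt i < 0 with hSf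
    refine ⟨↑Sf, ⟨(ctrb A B).mulVec y, ⟨y, rfl⟩, ?_⟩, ?_⟩
    · intro i hi
      rw [hMV]
      have hyi : y (⟨len i - 1, hDlt i⟩, 0)
          = if (Nf (len i)).card ≤ (Pf (len i)).card then 1 else -1 := by
        rw [hy]
        have : len i - 1 + 1 = len i := by have := hlen_pos i; omega
        simp only [this]
      rw [hyi]
      have hi' : if (Nf (len i)).card ≤ (Pf (len i)).card then 0 < wgt i
          else wgt i < 0 := by
        rw [hSf] at hi
        simpa using hi
      by_cases hc : (Nf (len i)).card ≤ (Pf (len i)).card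
      · rw [if_pos hc] at hi' ⊢
        simpa using hi'
      · rw [if_neg hc] at hi' ⊢
        nlinarith
    · rw [Set.ncard_coe_finset, hfib Sf]
      refine Finset.sum_congr rfl fun d _ => ?_
      by_cases hc : (Nf d).card ≤ (Pf d).card
      · have heq : Sf.filter (fun i => len i = d) = Pf d := by
          ext i
          simp only [hSf, hPf, Finset.mem_filter, Finset.mem_univ, true_and]
          constructor
          · rintro ⟨hif, hl⟩
            rw [hl, if_pos hc] at hif
            exact ⟨hl, hif⟩
          · rintro ⟨hl, hw⟩
            exact ⟨by rw [hl, if_pos hc]; exact hw, hl⟩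
        rw [heq, max_eq_right hc]
      · have heq : Sf.filter (fun i => len i = d) = Nf d := by
          ext i
          simp only [hSf, hNf, Finset.mem_filter, Finset.mem_univ, true_and]
          constructor
          · rintro ⟨hif, hl⟩
            rw [hl, if_neg hc] at hif
            exact ⟨hl, hif⟩
          · rintro ⟨hl, hw⟩
            exact ⟨by rw [hl, if_neg hc]; exact hw, hl⟩
        rw [heq, max_eq_left (le_of_not_ge hc)]
  · -- upper bound
    rintro c ⟨S, ⟨k, ⟨y, rfl⟩, hpos⟩, rfl⟩
    set Tf : Finset (Fin n) := Finset.univ.filter fun i =>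
      0 < wgt i * y (⟨len i - 1, hDlt i⟩, 0) with hTf
    have hsub : S ⊆ ↑Tf := by
      intro i hi
      simp only [hTf, Finset.coe_filter, Finset.mem_univ, true_and, Set.mem_setOf_eq]
      rw [← hMV y i]
      exact hpos i hi
    have h1 : S.ncard ≤ Tf.card := by
      rw [← Set.ncard_coe_finset]
      exact Set.ncard_le_ncard hsub (Finset.finite_toSet _)
    refine h1.trans ?_
    rw [hfib Tf]
    refine Finset.sum_le_sum fun d hd => ?_
    have hdn : d - 1 < n := by
      have hd1 : 1 ≤ d := (Finset.mem_Icc.1 hd).1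
      have hd2 : d ≤ dmax := (Finset.mem_Icc.1 hd).2
      have hsup : dmax ≤ n := by
        rw [hdmax]
        exact Finset.sup_le fun i _ => hlen_le i
      omega
    rcases lt_trichotomy (y (⟨d - 1, hdn⟩, 0)) 0 with hy0 | hy0 | hy0
    · refine le_trans (Finset.card_le_card ?_) (le_max_left _ _)
      intro i hi
      simp only [hTf, Finset.mem_filter, Finset.mem_univ, true_and] at hi
      obtain ⟨hw, hl⟩ := hi
      have hidx : (⟨len i - 1, hDlt i⟩ : Fin n) = ⟨d - 1, hdn⟩ := Fin.ext (by simp [hl])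
      rw [hidx] at hw
      simp only [hNf, Finset.mem_filter, Finset.mem_univ, true_and]
      refine ⟨hl, ?_⟩
      nlinarith
    · refine le_trans (Finset.card_le_card ?_) (le_max_left _ _)
      intro i hi
      simp only [hTf, Finset.mem_filter, Finset.mem_univ, true_and] at hi
      obtain ⟨hw, hl⟩ := hi
      have hidx : (⟨len i - 1, hDlt i⟩ : Fin n) = ⟨d - 1, hdn⟩ := Fin.ext (by simp [hl])
      rw [hidx, hy0, mul_zero] at hw
      exact absurd hw (lt_irrefl 0)
    · refine le_trans (Finset.card_le_card ?_) (le_max_right _ _)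
      intro i hi
      simp only [hTf, Finset.mem_filter, Finset.mem_univ, true_and] at hi
      obtain ⟨hw, hl⟩ := hi
      have hidx : (⟨len i - 1, hDlt i⟩ : Fin n) = ⟨d - 1, hdn⟩ := Fin.ext (by simp [hl])
      rw [hidx] at hw
      simp only [hPf, Finset.mem_filter, Finset.mem_univ, true_and]
      refine ⟨hl, ?_⟩
      nlinarith
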